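/- Let R be a commutative ring, M and N R-modules, and r₁, r₂ natural numbers such that (r₁ + r₂)! is invertible in R. Let f be an R-linear endomorphism of M with f^(r₁+1) = 0 and g an R-linear endomorphism of N with g^(r₂+1) = 0. Then, in the endomorphism algebra of M ⊗_R N, exp(f ⊗ id_N + id_M ⊗ g) = exp(f) ⊗ exp(g), where exp(x) = ∑_{n=0}^{r₁+r₂} (n!)⁻¹ • xⁿ denotes the truncated exponential and exp(f) ⊗ exp(g) denotes the endomorphism of M ⊗_R N induced by exp(f) and exp(g) on the two factors. -/

import Mathlib

open TensorProduct

/-- If `(r₁ + r₂)!` is invertible in `R`, `f ^ (r₁+1) = 0` on `M` and `g ^ (r₂+1) = 0`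
on `N`, then in `End (M ⊗[R] N)` one has `exp (f ⊗ id + id ⊗ g) = exp f ⊗ exp g`,
where `exp x = ∑_{n=0}^{r₁+r₂} (n!)⁻¹ • xⁿ` is the truncated exponential. -/
theorem truncated_exp_tensor (R : Type*) [CommRing R]
    (M N : Type*) [AddCommGroup M] [Module R M] [AddCommGroup N] [Module R N]
    (r₁ r₂ : ℕ) (hR : IsUnit ((Nat.factorial (r₁ + r₂) : ℕ) : R))
    (f : Module.End R M) (g : Module.End R N)
    (hf : f ^ (r₁ + 1) = 0) (hg : g ^ (r₂ + 1) = 0) :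
    (∑ n ∈ Finset.range (r₁ + r₂ + 1),
        (Ring.inverse ((Nat.factorial n : ℕ) : R)) •
          (TensorProduct.map f LinearMap.id + TensorProduct.map LinearMap.id g :
            Module.End R (M ⊗[R] N)) ^ n) =
      TensorProduct.map
        (∑ n ∈ Finset.range (r₁ + r₂ + 1),
          (Ring.inverse ((Nat.factorial n : ℕ) : R)) • f ^ n)
        (∑ n ∈ Finset.range (r₁ + r₂ + 1),
          (Ring.inverse ((Nat.factorial n : ℕ) : R)) • g ^ n) := by
  set r := r₁ + r₂ with hr
  set F : Module.End R (M ⊗[R] N) := TensorProduct.map f LinearMap.id with hF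
  set G : Module.End R (M ⊗[R] N) := TensorProduct.map LinearMap.id g with hG
  have hid : (LinearMap.id : M →ₗ[R] M) = 1 := rfl
  have hidN : (LinearMap.id : N →ₗ[R] N) = 1 := rfl
  have hFG : ∀ a b : ℕ, F ^ a * G ^ b = TensorProduct.map (f ^ a) (g ^ b) := by
    intro a b
    rw [hF, hG, TensorProduct.map_pow, TensorProduct.map_pow, ← TensorProduct.map_mul,
      hid, hidN, one_pow, one_pow, mul_one, one_mul]
  have hcomm : Commute F G := by
    show F * G = G * F
    rw [hF, hG, ← TensorProduct.map_mul, ← TensorProduct.map_mul, hid, hidN,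
      one_mul, mul_one, mul_one, one_mul]
  -- the term
  set T : ℕ × ℕ → Module.End R (M ⊗[R] N) := fun p =>
    (Ring.inverse ((Nat.factorial p.1 : ℕ) : R) * Ring.inverse ((Nat.factorial p.2 : ℕ) : R)) •
      (F ^ p.1 * G ^ p.2) with hTdef
  have hu : ∀ m, m ≤ r → IsUnit ((Nat.factorial m : ℕ) : R) := fun m hm =>
    isUnit_of_dvd_unit (Nat.cast_dvd_cast (Nat.factorial_dvd_factorial hm)) hR
  have hinv : ∀ n, n ≤ r → ∀ k, k ≤ n →
      Ring.inverse ((Nat.factorial n : ℕ) : R) * (n.choose k : R) =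
        Ring.inverse ((Nat.factorial k : ℕ) : R) *
          Ring.inverse ((Nat.factorial (n - k) : ℕ) : R) := by
    intro n hn k hk
    have hun := hu n hn
    have huk := hu k (hk.trans hn)
    have hunk := hu (n - k) ((Nat.sub_le n k).trans hn)
    refine hun.mul_left_cancel ?_
    have h2 : ((n.choose k : R)) * (Nat.factorial k : R) * (Nat.factorial (n - k) : R)
        = (Nat.factorial n : R) := by
      exact_mod_cast congrArg (fun m : ℕ => (m : R)) (Nat.choose_mul_factorial_mul_factorial hk)
    have e1 : (Nat.factorial k : R) * Ring.inverse ((Nat.factorial k : ℕ) : R) = 1 :=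
      Ring.mul_inverse_cancel _ huk
    have e2 : (Nat.factorial (n - k) : R) * Ring.inverse ((Nat.factorial (n - k) : ℕ) : R) = 1 :=
      Ring.mul_inverse_cancel _ hunk
    have e3 : (Nat.factorial n : R) * Ring.inverse ((Nat.factorial n : ℕ) : R) = 1 :=
      Ring.mul_inverse_cancel _ hun
    calc (Nat.factorial n : R) * (Ring.inverse ((Nat.factorial n : ℕ) : R) * (n.choose k : R))
        = ((Nat.factorial n : R) * Ring.inverse ((Nat.factorial n : ℕ) : R)) * (n.choose k : R) := by
          ring
      _ = (n.choose k : R) := by rw [e3, one_mul]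
      _ = (n.choose k : R) *
            (((Nat.factorial k : R) * Ring.inverse ((Nat.factorial k : ℕ) : R)) *
              ((Nat.factorial (n - k) : R) * Ring.inverse ((Nat.factorial (n - k) : ℕ) : R))) := by
          rw [e1, e2]; ring
      _ = (Nat.factorial n : R) *
            (Ring.inverse ((Nat.factorial k : ℕ) : R) *
              Ring.inverse ((Nat.factorial (n - k) : ℕ) : R)) := by
          rw [← h2]; ring
  -- vanishing of T outside the box
  have hT0 : ∀ p : ℕ × ℕ, (r₁ + 1 ≤ p.1 ∨ r₂ + 1 ≤ p.2) → T p = 0 := by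
    rintro ⟨a, b⟩ (h | h)
    · have : f ^ a = 0 := pow_eq_zero_of_le h hf
      simp [hTdef, hFG, this]
    · have : g ^ b = 0 := pow_eq_zero_of_le h hg
      simp [hTdef, hFG, this]
  -- the "box"
  set Q : Finset (ℕ × ℕ) := Finset.range (r₁ + 1) ×ˢ Finset.range (r₂ + 1) with hQ
  -- LHS as a triangular sum
  have hL : (∑ n ∈ Finset.range (r + 1),
      (Ring.inverse ((Nat.factorial n : ℕ) : R)) • (F + G) ^ n) =
      ∑ n ∈ Finset.range (r + 1), ∑ k ∈ Finset.range (n + 1), T (k, n - k) := by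
    refine Finset.sum_congr rfl fun n hn => ?_
    have hnr : n ≤ r := Nat.lt_succ_iff.mp (Finset.mem_range.mp hn)
    rw [hcomm.add_pow, Finset.smul_sum]
    refine Finset.sum_congr rfl fun k hk => ?_
    have hkn : k ≤ n := Nat.lt_succ_iff.mp (Finset.mem_range.mp hk)
    have hcast : (F ^ k * G ^ (n - k)) * ((n.choose k : ℕ) : Module.End R (M ⊗[R] N)) =
        ((n.choose k : ℕ) : R) • (F ^ k * G ^ (n - k)) := by
      rw [show ((n.choose k : ℕ) : Module.End R (M ⊗[R] N)) =
          algebraMap R (Module.End R (M ⊗[R] N)) ((n.choose k : ℕ) : R) from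
          (map_natCast (algebraMap R (Module.End R (M ⊗[R] N))) _).symm,
        ← Algebra.commutes, ← Algebra.smul_def]
    rw [hcast, smul_smul, hinv n hnr k hkn]
  -- triangle = biUnion of antidiagonals
  have hdisj : (↑(Finset.range (r + 1)) : Set ℕ).PairwiseDisjoint
      (fun n => Finset.HasAntidiagonal.antidiagonal n) := by
    intro a _ b _ hab
    simp only [Finset.disjoint_left]
    intro p hpa hpb
    exact hab ((Finset.HasAntidiagonal.mem_antidiagonal.mp hpa).symm.trans
      (Finset.HasAntidiagonal.mem_antidiagonal.mp hpb))
  have hL2 : (∑ n ∈ Finset.range (r + 1), ∑ k ∈ Finset.range (n + 1), T (k, n - k)) =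
      ∑ p ∈ (Finset.range (r + 1)).biUnion (fun n => Finset.HasAntidiagonal.antidiagonal n), T p := by
    rw [Finset.sum_biUnion hdisj]
    exact Finset.sum_congr rfl fun n _ =>
      (Finset.Nat.sum_antidiagonal_eq_sum_range_succ_mk _ n).symm
  -- biUnion sum = box sum
  have hQsub : Q ⊆ (Finset.range (r + 1)).biUnion (fun n => Finset.HasAntidiagonal.antidiagonal n) := by
    intro p hp
    rw [hQ, Finset.mem_product, Finset.mem_range, Finset.mem_range] at hp
    rw [Finset.mem_biUnion]
    exact ⟨p.1 + p.2, Finset.mem_range.mpr (by omega), Finset.HasAntidiagonal.mem_antidiagonal.mpr rfl⟩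
  have hL3 : (∑ p ∈ (Finset.range (r + 1)).biUnion (fun n => Finset.HasAntidiagonal.antidiagonal n), T p) =
      ∑ p ∈ Q, T p := by
    refine (Finset.sum_subset hQsub fun p _ hpQ => ?_).symm
    refine hT0 p ?_
    rw [hQ, Finset.mem_product] at hpQ
    simp only [Finset.mem_range, not_and_or, not_lt] at hpQ
    exact hpQ
  -- RHS as a square sum
  have hR2 : TensorProduct.map
      (∑ n ∈ Finset.range (r + 1), (Ring.inverse ((Nat.factorial n : ℕ) : R)) • f ^ n)
      (∑ n ∈ Finset.range (r + 1), (Ring.inverse ((Nat.factorial n : ℕ) : R)) • g ^ n) =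
      ∑ b ∈ Finset.range (r + 1), ∑ a ∈ Finset.range (r + 1), T (a, b) := by
    rw [← TensorProduct.mapBilinear_apply, map_sum]
    refine Finset.sum_congr rfl fun b _ => ?_
    rw [map_smul, map_sum, LinearMap.sum_apply, Finset.smul_sum]
    refine Finset.sum_congr rfl fun a _ => ?_
    rw [map_smul, LinearMap.smul_apply, smul_smul, TensorProduct.mapBilinear_apply, hTdef,
      mul_comm]
    simp only [hFG]
  have hR3 : (∑ b ∈ Finset.range (r + 1), ∑ a ∈ Finset.range (r + 1), T (a, b)) =
      ∑ p ∈ Q, T p := by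
    rw [Finset.sum_comm, ← Finset.sum_product']
    refine (Finset.sum_subset ?_ fun p _ hpQ => ?_).symm
    · rw [hQ]
      refine Finset.product_subset_product ?_ ?_ <;>
        exact Finset.range_subset_range.mpr (by omega)
    · refine hT0 p ?_
      rw [hQ, Finset.mem_product] at hpQ
      simp only [Finset.mem_range, not_and_or, not_lt] at hpQ
      exact hpQ
  rw [hL, hL2, hL3, hR2, hR3]
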